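/- For every γ ∈ (0,1) one has m_γ = inf over y ∈ M of G_γ(y). -/

import Mathlib

open MeasureTheory Set Real

noncomputable section

/-- Pairs `(y, y')` representing a function of Sobolev class `W¹₂[0,1]`:
`y` is absolutely continuous on `[0,1]` (being an integral of `y'`)
with derivative `y'` belonging to `L²[0,1]`. -/
def W12 : Set ((ℝ → ℝ) × (ℝ → ℝ)) :=
  {p | (∀ x ∈ Icc (0:ℝ) 1, p.1 x = p.1 0 + ∫ t in (0:ℝ)..x, p.2 t) ∧
    IntervalIntegrable p.2 volume 0 1 ∧
    IntervalIntegrable (fun t => (p.2 t) ^ 2) volume 0 1}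

/-- The Rayleigh quotient `(∫₀¹ ((y')² + q y²) dx) / (∫₀¹ y² dx)`. -/
def Rayleigh (q : ℝ → ℝ) (p : (ℝ → ℝ) × (ℝ → ℝ)) : ℝ :=
  (∫ t in (0:ℝ)..1, ((p.2 t) ^ 2 + q t * (p.1 t) ^ 2)) /
    ∫ t in (0:ℝ)..1, (p.1 t) ^ 2

/-- The smallest eigenvalue `λ₁(q)` of the Neumann problem `-y'' + q y = λ y`,
`y'(0) = y'(1) = 0`, defined as the infimum of Rayleigh quotients over
nonzero `y ∈ W¹₂[0,1]`. -/
def lambda1 (q : ℝ → ℝ) : ℝ :=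
  sInf {r | ∃ p ∈ W12, 0 < (∫ t in (0:ℝ)..1, (p.1 t) ^ 2) ∧ r = Rayleigh q p}

/-- The class `A_γ` of potentials: `q ∈ L¹[0,1]`, `q ≥ 0` a.e. on `[0,1]`,
`∫₀¹ q^γ dx = 1`. -/
def Agamma (γ : ℝ) : Set (ℝ → ℝ) :=
  {q | IntervalIntegrable q volume 0 1 ∧
    (∀ᵐ t ∂(volume.restrict (Icc (0:ℝ) 1)), 0 ≤ q t) ∧
    (∫ t in (0:ℝ)..1, q t ^ γ) = 1}

/-- `m_γ := inf_{q ∈ A_γ} λ₁(q)`. -/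
def mGamma (γ : ℝ) : ℝ := sInf (lambda1 '' Agamma γ)

/-- The set `M` of uniformly positive functions of class `W¹₂[0,1]`. -/
def Mset : Set ((ℝ → ℝ) × (ℝ → ℝ)) :=
  {p ∈ W12 | ∃ ζ > (0:ℝ), ∀ x ∈ Icc (0:ℝ) 1, ζ ≤ p.1 x}

/-- `J_γ(y) := ∫₀¹ (y')² dx + (∫₀¹ y^{2γ/(γ−1)} dx)^{(γ−1)/γ}`. -/
def Jg (γ : ℝ) (p : (ℝ → ℝ) × (ℝ → ℝ)) : ℝ :=
  (∫ t in (0:ℝ)..1, (p.2 t) ^ 2) +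
    (∫ t in (0:ℝ)..1, (p.1 t) ^ (2 * γ / (γ - 1))) ^ ((γ - 1) / γ)

/-- `G_γ(y) := J_γ(y) / ∫₀¹ y² dx`. -/
def Gg (γ : ℝ) (p : (ℝ → ℝ) × (ℝ → ℝ)) : ℝ :=
  Jg γ p / ∫ t in (0:ℝ)..1, (p.1 t) ^ 2

/-! ### Auxiliary lemmas -/

lemma uIcc01 : uIcc (0:ℝ) 1 = Icc 0 1 := uIcc_of_le zero_le_one

lemma contOn_II {f : ℝ → ℝ} (hf : ContinuousOn f (Icc 0 1)) :
    IntervalIntegrable f volume 0 1 :=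
  ContinuousOn.intervalIntegrable (by rwa [uIcc01])

lemma W12_continuousOn {p : (ℝ → ℝ) × (ℝ → ℝ)} (hp : p ∈ W12) :
    ContinuousOn p.1 (Icc 0 1) := by
  have h1 : IntegrableOn p.2 (uIcc (0:ℝ) 1) volume := by
    rw [uIcc01, integrableOn_Icc_iff_integrableOn_Ioc]
    exact hp.2.1.1
  have h2 := intervalIntegral.continuousOn_primitive_interval (a := 0) (b := 1) (μ := volume) h1
  rw [uIcc01] at h2
  exact (continuousOn_const.add h2).congr (fun x hx => hp.1 x hx)

lemma rayleigh_num_nonneg {q : ℝ → ℝ} (hq0 : ∀ᵐ t ∂(volume.restrict (Icc (0:ℝ) 1)), 0 ≤ q t)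
    (p : (ℝ → ℝ) × (ℝ → ℝ)) :
    0 ≤ ∫ t in (0:ℝ)..1, ((p.2 t) ^ 2 + q t * (p.1 t) ^ 2) := by
  apply intervalIntegral.integral_nonneg_of_ae_restrict zero_le_one
  filter_upwards [hq0] with t ht
  exact add_nonneg (sq_nonneg _) (mul_nonneg ht (sq_nonneg _))

lemma integral_sq_nonneg (f : ℝ → ℝ) : 0 ≤ ∫ t in (0:ℝ)..1, f t ^ 2 :=
  intervalIntegral.integral_nonneg zero_le_one (fun _ _ => sq_nonneg _)

lemma rayleigh_nonneg {q : ℝ → ℝ} (hq0 : ∀ᵐ t ∂(volume.restrict (Icc (0:ℝ) 1)), 0 ≤ q t)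
    (p : (ℝ → ℝ) × (ℝ → ℝ)) : 0 ≤ Rayleigh q p :=
  div_nonneg (rayleigh_num_nonneg hq0 p) (integral_sq_nonneg _)

lemma one_mem_W12 : ((fun _ => (1:ℝ)), (fun _ => (0:ℝ))) ∈ W12 := by
  refine ⟨fun x _ => by simp, ?_, ?_⟩ <;> simpa using intervalIntegrable_const

lemma RSet_nonempty (q : ℝ → ℝ) :
    {r | ∃ p ∈ W12, 0 < (∫ t in (0:ℝ)..1, (p.1 t) ^ 2) ∧ r = Rayleigh q p}.Nonempty := by
  refine ⟨Rayleigh q ((fun _ => (1:ℝ)), (fun _ => (0:ℝ))),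
    ((fun _ => (1:ℝ)), (fun _ => (0:ℝ))), one_mem_W12, ?_, rfl⟩
  simp

lemma RSet_lb {q : ℝ → ℝ} (hq0 : ∀ᵐ t ∂(volume.restrict (Icc (0:ℝ) 1)), 0 ≤ q t) :
    ∀ r ∈ {r | ∃ p ∈ W12, 0 < (∫ t in (0:ℝ)..1, (p.1 t) ^ 2) ∧ r = Rayleigh q p}, (0:ℝ) ≤ r := by
  rintro r ⟨p, _, _, rfl⟩
  exact rayleigh_nonneg hq0 p

lemma lambda1_nonneg {q : ℝ → ℝ} (hq0 : ∀ᵐ t ∂(volume.restrict (Icc (0:ℝ) 1)), 0 ≤ q t) :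
    0 ≤ lambda1 q :=
  le_csInf (RSet_nonempty q) (RSet_lb hq0)

lemma lambda1_le {q : ℝ → ℝ} (hq0 : ∀ᵐ t ∂(volume.restrict (Icc (0:ℝ) 1)), 0 ≤ q t)
    {p : (ℝ → ℝ) × (ℝ → ℝ)} (hp : p ∈ W12)
    (hpos : 0 < (∫ t in (0:ℝ)..1, (p.1 t) ^ 2)) : lambda1 q ≤ Rayleigh q p :=
  csInf_le ⟨0, RSet_lb hq0⟩ ⟨p, hp, hpos, rfl⟩

end

section PartOne

variable {γ : ℝ} (hγ : γ ∈ Ioo (0:ℝ) 1)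

lemma part1 {p : (ℝ → ℝ) × (ℝ → ℝ)} (hγ : γ ∈ Ioo (0:ℝ) 1) (hp : p ∈ Mset) :
    mGamma γ ≤ Gg γ p := by
  obtain ⟨hγ0, hγ1⟩ := hγ
  obtain ⟨hpW, ζ, hζ, hζle⟩ := hp
  have hγne : γ ≠ 0 := ne_of_gt hγ0
  have hγ1ne : γ - 1 ≠ 0 := by linarith
  set z := p.1 with hz_def
  have hz : ContinuousOn z (Icc 0 1) := W12_continuousOn hpW
  have hzpos : ∀ x ∈ Icc (0:ℝ) 1, 0 < z x := fun x hx => lt_of_lt_of_le hζ (hζle x hx)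
  -- the exponent and the integral I
  set e : ℝ := 2 * γ / (γ - 1) with he_def
  have hze : ContinuousOn (fun t => z t ^ e) (Icc 0 1) :=
    hz.rpow_const (fun x hx => Or.inl (ne_of_gt (hzpos x hx)))
  set I : ℝ := ∫ t in (0:ℝ)..1, z t ^ e with hI_def
  have hI : 0 < I := by
    apply intervalIntegral.intervalIntegral_pos_of_pos_on (contOn_II hze)
      (fun x hx => rpow_pos_of_pos (hzpos x (Ioo_subset_Icc_self hx)) e) one_pos
  set c : ℝ := I ^ (-(1/γ)) with hc_def
  have hc : 0 < c := rpow_pos_of_pos hI _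
  set q : ℝ → ℝ := fun t => c * z t ^ ((2:ℝ)/(γ - 1)) with hq_def
  have hqcont : ContinuousOn q (Icc 0 1) :=
    continuousOn_const.mul (hz.rpow_const (fun x hx => Or.inl (ne_of_gt (hzpos x hx))))
  have hqII : IntervalIntegrable q volume 0 1 := contOn_II hqcont
  have hq0 : ∀ᵐ t ∂(volume.restrict (Icc (0:ℝ) 1)), 0 ≤ q t := by
    refine (ae_restrict_iff' measurableSet_Icc).mpr (ae_of_all _ (fun t ht => ?_))
    exact le_of_lt (mul_pos hc (rpow_pos_of_pos (hzpos t ht) _))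
  have hcγ : c ^ γ = I⁻¹ := by
    rw [hc_def, ← Real.rpow_mul hI.le]
    rw [show -(1/γ) * γ = -1 by field_simp]
    exact Real.rpow_neg_one I
  have hqγ : (∫ t in (0:ℝ)..1, q t ^ γ) = 1 := by
    have hcongr : EqOn (fun t => q t ^ γ) (fun t => I⁻¹ * z t ^ e) (uIcc (0:ℝ) 1) := by
      rw [uIcc01]
      intro t ht
      have hzt := hzpos t ht
      simp only [hq_def]
      rw [Real.mul_rpow hc.le (Real.rpow_nonneg hzt.le _), ← Real.rpow_mul hzt.le,
        show (2:ℝ)/(γ-1) * γ = e by rw [he_def]; ring, hcγ]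
    rw [intervalIntegral.integral_congr hcongr, intervalIntegral.integral_const_mul, ← hI_def,
      inv_mul_cancel₀ hI.ne']
  have hqA : q ∈ Agamma γ := ⟨hqII, hq0, hqγ⟩
  -- ∫ q z² = c * I = I ^ ((γ-1)/γ)
  have hqz2 : (∫ t in (0:ℝ)..1, q t * z t ^ 2) = I ^ ((γ-1)/γ) := by
    have hcongr : EqOn (fun t => q t * z t ^ 2) (fun t => c * z t ^ e) (uIcc (0:ℝ) 1) := by
      rw [uIcc01]
      intro t ht
      have hzt := hzpos t ht
      simp only [hq_def]
      have h2 : z t ^ (2:ℕ) = z t ^ ((2:ℝ)) := by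
        rw [show ((2:ℝ)) = ((2:ℕ):ℝ) by norm_num, Real.rpow_natCast]
      rw [mul_assoc, h2, ← Real.rpow_add hzt,
        show (2:ℝ)/(γ-1) + 2 = e by rw [he_def]; field_simp; ring]
    rw [intervalIntegral.integral_congr hcongr, intervalIntegral.integral_const_mul, ← hI_def,
      hc_def, ← Real.rpow_one I, ← Real.rpow_mul hI.le, ← Real.rpow_add hI]
    norm_num
    rw [show -γ⁻¹ + 1 = (γ-1)/γ by field_simp; ring]
  -- denominator is positive
  have hden : 0 < ∫ t in (0:ℝ)..1, z t ^ 2 := by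
    apply intervalIntegral.intervalIntegral_pos_of_pos_on (contOn_II (hz.pow 2))
      (fun x hx => pow_pos (hzpos x (Ioo_subset_Icc_self hx)) 2) one_pos
  -- Rayleigh q p = Gg γ p
  have hqz2II : IntervalIntegrable (fun t => q t * z t ^ 2) volume 0 1 :=
    hqII.mul_continuousOn (by rw [uIcc01]; exact hz.pow 2)
  have hray : Rayleigh q p = Gg γ p := by
    rw [Rayleigh, Gg, Jg, intervalIntegral.integral_add hpW.2.2 hqz2II, hqz2]
  -- conclude
  have h1 : lambda1 q ≤ Rayleigh q p := lambda1_le hq0 hpW hden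
  have h2 : mGamma γ ≤ lambda1 q := by
    apply csInf_le
    · refine ⟨0, ?_⟩
      rintro r ⟨q', hq', rfl⟩
      exact lambda1_nonneg hq'.2.1
    · exact ⟨q, hqA, rfl⟩
  rw [← hray]
  exact h2.trans h1

end PartOne

section RevHolder

lemma memLp_ofReal {α : Type*} [MeasurableSpace α] {μ : Measure α} {f : α → ℝ} {r : ℝ}
    (hr : 0 < r) (hmeas : AEStronglyMeasurable f μ) (hf0 : 0 ≤ᵐ[μ] f)
    (hint : Integrable (fun x => f x ^ r) μ) : MemLp f (ENNReal.ofReal r) μ := by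
  have A : ENNReal.ofReal r ≠ 0 := by rwa [Ne, ENNReal.ofReal_eq_zero, not_le]
  have B : ENNReal.ofReal r ≠ ⊤ := ENNReal.ofReal_ne_top
  rw [← memLp_norm_rpow_iff hmeas A B, ENNReal.toReal_ofReal hr.le, ENNReal.div_self A B,
    memLp_one_iff_integrable]
  refine hint.congr ?_
  filter_upwards [hf0] with x hx
  rw [Real.norm_of_nonneg hx]

lemma rev_holder {γ : ℝ} (hγ : γ ∈ Ioo (0:ℝ) 1) {q z : ℝ → ℝ} {ζ : ℝ} (hζ : 0 < ζ)
    (hqII : IntervalIntegrable q volume 0 1)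
    (hq0 : ∀ᵐ t ∂(volume.restrict (Icc (0:ℝ) 1)), 0 ≤ q t)
    (hqγ : (∫ t in (0:ℝ)..1, q t ^ γ) = 1)
    (hz : ContinuousOn z (Icc 0 1)) (hzζ : ∀ x ∈ Icc (0:ℝ) 1, ζ ≤ z x) :
    (∫ t in (0:ℝ)..1, z t ^ (2 * γ / (γ - 1))) ^ ((γ - 1) / γ)
      ≤ ∫ t in (0:ℝ)..1, q t * z t ^ 2 := by
  obtain ⟨hγ0, hγ1⟩ := hγ
  have hγne : γ ≠ 0 := ne_of_gt hγ0
  have h1γ : (0:ℝ) < 1 - γ := by linarith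
  set e : ℝ := 2 * γ / (γ - 1) with he_def
  have hzpos : ∀ x ∈ Icc (0:ℝ) 1, 0 < z x := fun x hx => lt_of_lt_of_le hζ (hzζ x hx)
  set μ : Measure ℝ := volume.restrict (Ioc (0:ℝ) 1) with hμ_def
  have hq0' : ∀ᵐ t ∂μ, 0 ≤ q t := ae_restrict_of_ae_restrict_of_subset Ioc_subset_Icc_self hq0
  have hmem : ∀ᵐ t ∂μ, t ∈ Ioc (0:ℝ) 1 := self_mem_ae_restrict measurableSet_Ioc
  -- main objects
  set A : ℝ := ∫ t in (0:ℝ)..1, q t * z t ^ 2 with hA_def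
  set B : ℝ := ∫ t in (0:ℝ)..1, z t ^ e with hB_def
  have hzecont : ContinuousOn (fun t => z t ^ e) (Icc 0 1) :=
    hz.rpow_const (fun x hx => Or.inl (ne_of_gt (hzpos x hx)))
  have hB : 0 < B :=
    intervalIntegral.intervalIntegral_pos_of_pos_on (contOn_II hzecont)
      (fun x hx => rpow_pos_of_pos (hzpos x (Ioo_subset_Icc_self hx)) e) one_pos
  have hqz2II : IntervalIntegrable (fun t => q t * z t ^ 2) volume 0 1 :=
    hqII.mul_continuousOn (by rw [uIcc01]; exact hz.pow 2)
  have hA0 : 0 ≤ A := by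
    apply intervalIntegral.integral_nonneg_of_ae_restrict zero_le_one
    filter_upwards [hq0] with t ht
    exact mul_nonneg ht (sq_nonneg _)
  -- Hölder setup
  set F : ℝ → ℝ := fun t => (q t * z t ^ 2) ^ γ with hF_def
  set G : ℝ → ℝ := fun t => z t ^ (-(2 * γ)) with hG_def
  have hAint : Integrable (fun t => q t * z t ^ 2) μ := hqz2II.1
  have hFmeas : AEStronglyMeasurable F μ :=
    (hAint.aestronglyMeasurable.aemeasurable.pow aemeasurable_const).aestronglyMeasurable
  have hGcont : ContinuousOn G (Icc 0 1) :=
    hz.rpow_const (fun x hx => Or.inl (ne_of_gt (hzpos x hx)))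
  have hGmeas : AEStronglyMeasurable G μ :=
    (hGcont.mono Ioc_subset_Icc_self).aestronglyMeasurable measurableSet_Ioc
  have hF0 : 0 ≤ᵐ[μ] F := by
    filter_upwards [hq0'] with t ht
    exact Real.rpow_nonneg (mul_nonneg ht (sq_nonneg _)) γ
  have hG0 : 0 ≤ᵐ[μ] G := by
    filter_upwards [hmem] with t ht
    exact (Real.rpow_nonneg (hzpos t (Ioc_subset_Icc_self ht)).le _)
  -- F ^ (1/γ) = q z² a.e.
  have hFpow : ∀ᵐ t ∂μ, F t ^ (1/γ) = q t * z t ^ 2 := by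
    filter_upwards [hq0'] with t ht
    simp only [hF_def]
    rw [← Real.rpow_mul (mul_nonneg ht (sq_nonneg _)), mul_one_div_cancel hγne, Real.rpow_one]
  -- G ^ (1/(1-γ)) = z ^ e a.e.
  have hGpow : ∀ᵐ t ∂μ, G t ^ (1/(1-γ)) = z t ^ e := by
    filter_upwards [hmem] with t ht
    have hzt := hzpos t (Ioc_subset_Icc_self ht)
    simp only [hG_def]
    rw [← Real.rpow_mul hzt.le]
    congr 1
    rw [he_def, mul_one_div, div_eq_div_iff (by linarith : (1:ℝ)-γ ≠ 0) (by linarith : γ-(1:ℝ) ≠ 0)]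
    ring
  -- integrability of z ^ e on μ
  have hBint : Integrable (fun t => z t ^ e) μ := (contOn_II hzecont).1
  -- Memℒp facts
  have hFLp : MemLp F (ENNReal.ofReal (1/γ)) μ := by
    refine memLp_ofReal (by positivity) hFmeas hF0 ?_
    exact hAint.congr (by filter_upwards [hFpow] with t ht; rw [ht])
  have hGLp : MemLp G (ENNReal.ofReal (1/(1-γ))) μ := by
    refine memLp_ofReal (by positivity) hGmeas hG0 ?_
    exact hBint.congr (by filter_upwards [hGpow] with t ht; rw [ht])
  have hpq : (1/γ).HolderConjugate (1/(1-γ)) := by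
    rw [Real.holderConjugate_iff]
    constructor
    · rw [lt_div_iff₀ hγ0]; linarith
    · rw [one_div, one_div, inv_inv, inv_inv]; ring
  -- the Hölder inequality
  have hold := MeasureTheory.integral_mul_le_Lp_mul_Lq_of_nonneg hpq hF0 hG0 hFLp hGLp
  -- rewrite the three integrals
  have hFG : ∫ t, F t * G t ∂μ = 1 := by
    rw [← hqγ, intervalIntegral.integral_of_le zero_le_one]
    apply integral_congr_ae
    filter_upwards [hq0', hmem] with t htq htm
    have hzt := hzpos t (Ioc_subset_Icc_self htm)
    simp only [hF_def, hG_def]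
    rw [Real.mul_rpow htq (sq_nonneg _), ← Real.rpow_natCast (z t) 2,
      ← Real.rpow_mul hzt.le, mul_assoc, ← Real.rpow_add hzt]
    norm_num
  have hFint : ∫ t, F t ^ (1/γ) ∂μ = A := by
    rw [hA_def, intervalIntegral.integral_of_le zero_le_one]
    exact integral_congr_ae hFpow
  have hGint : ∫ t, G t ^ (1/(1-γ)) ∂μ = B := by
    rw [hB_def, intervalIntegral.integral_of_le zero_le_one]
    exact integral_congr_ae hGpow
  rw [hFG, hFint, hGint] at hold
  have hexp1 : (1:ℝ) / (1/γ) = γ := by field_simp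
  have hexp2 : (1:ℝ) / (1/(1-γ)) = 1-γ := by field_simp
  rw [hexp1, hexp2] at hold
  -- now: 1 ≤ A ^ γ * B ^ (1-γ); conclude B ^ ((γ-1)/γ) ≤ A
  have hApos : 0 < A := by
    rcases lt_or_eq_of_le hA0 with h | h
    · exact h
    · exfalso
      rw [← h, Real.zero_rpow hγne, zero_mul] at hold
      linarith
  have h2 : B ^ (γ - 1) ≤ A ^ γ := by
    have := mul_le_mul_of_nonneg_right hold (Real.rpow_nonneg hB.le (γ-1))
    rw [one_mul, mul_assoc, ← Real.rpow_add hB] at this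
    norm_num at this
    exact this
  have h3 := Real.rpow_le_rpow (Real.rpow_nonneg hB.le _) h2 (le_of_lt (by positivity : (0:ℝ) < 1/γ))
  rw [← Real.rpow_mul hB.le, ← Real.rpow_mul hApos.le, mul_one_div_cancel hγne, Real.rpow_one,
    ← div_eq_mul_one_div] at h3
  exact h3

end RevHolder

section PartTwo

lemma sqrt_lip (δ a b : ℝ) : |Real.sqrt (a^2 + δ^2) - Real.sqrt (b^2 + δ^2)| ≤ |a - b| := by
  have ha : Real.sqrt (a^2 + δ^2) = ‖(a:ℂ) + δ*Complex.I‖ := (Complex.norm_add_mul_I a δ).symm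
  have hb : Real.sqrt (b^2 + δ^2) = ‖(b:ℂ) + δ*Complex.I‖ := (Complex.norm_add_mul_I b δ).symm
  rw [ha, hb]
  have h2 : ((a:ℂ) + δ*Complex.I) - ((b:ℂ) + δ*Complex.I) = ((a - b : ℝ) : ℂ) := by
    push_cast; ring
  have := abs_norm_sub_norm_le ((a:ℂ) + δ*Complex.I) ((b:ℂ) + δ*Complex.I)
  rwa [h2, Complex.norm_real, Real.norm_eq_abs] at this

lemma sqrt_ge_delta {δ : ℝ} (hδ : 0 ≤ δ) (a : ℝ) : δ ≤ Real.sqrt (a^2 + δ^2) := by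
  have h1 : Real.sqrt (δ^2) ≤ Real.sqrt (a^2 + δ^2) :=
    Real.sqrt_le_sqrt (by nlinarith)
  rwa [Real.sqrt_sq hδ] at h1

lemma sqrt_le_abs_add {δ : ℝ} (hδ : 0 ≤ δ) (a : ℝ) : Real.sqrt (a^2 + δ^2) ≤ |a| + δ := by
  have h1 : Real.sqrt (a^2 + δ^2) ≤ Real.sqrt ((|a| + δ)^2) :=
    Real.sqrt_le_sqrt (by nlinarith [abs_nonneg a, sq_abs a])
  rwa [Real.sqrt_sq (by positivity)] at h1

lemma rpow_half_sq {x : ℝ} (hx : 0 ≤ x) : (x ^ ((1:ℝ)/2)) ^ 2 = x := by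
  rw [← Real.rpow_natCast (x ^ ((1:ℝ)/2)) 2, ← Real.rpow_mul hx]
  norm_num

lemma cs_bound {v : ℝ → ℝ} (hvint : Integrable v volume)
    (hv2int : Integrable (fun t => v t ^ 2) volume) {a b : ℝ} (hab : a ≤ b) :
    (∫ t in a..b, |v t|) ^ 2 ≤ (b - a) * ∫ t in a..b, v t ^ 2 := by
  set μ : Measure ℝ := volume.restrict (Ioc a b) with hμ_def
  haveI : IsFiniteMeasure μ := ⟨by rw [Measure.restrict_apply_univ]; exact measure_Ioc_lt_top⟩
  have h21 : (2:ℝ).HolderConjugate 2 := by rw [Real.holderConjugate_iff]; norm_num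
  have hmeas : AEStronglyMeasurable (fun t => |v t|) μ := by
    have := (hvint.restrict (s := Ioc a b)).aestronglyMeasurable.norm
    simpa [Real.norm_eq_abs] using this
  have habs2 : (fun t => |v t| ^ (2:ℝ)) = fun t => v t ^ 2 := by
    funext t
    rw [show ((2:ℝ)) = ((2:ℕ):ℝ) by norm_num, Real.rpow_natCast, sq_abs]
  have hfLp : MemLp (fun t => |v t|) (ENNReal.ofReal 2) μ := by
    refine memLp_ofReal two_pos hmeas (ae_of_all _ fun t => abs_nonneg _) ?_
    rw [habs2]
    exact hv2int.restrict
  have hgLp : MemLp (fun _ : ℝ => (1:ℝ)) (ENNReal.ofReal 2) μ :=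
    memLp_const (1:ℝ)
  have hold := MeasureTheory.integral_mul_le_Lp_mul_Lq_of_nonneg h21
    (ae_of_all _ fun t => abs_nonneg (v t)) (ae_of_all _ fun _ => zero_le_one) hfLp hgLp
  simp only [mul_one, Real.one_rpow, habs2] at hold
  rw [integral_const] at hold
  have hvol : (μ univ).toReal = b - a := by
    rw [hμ_def, Measure.restrict_apply_univ, Real.volume_Ioc, ENNReal.toReal_ofReal (by linarith)]
  rw [measureReal_def, hvol, smul_eq_mul, mul_one] at hold
  have hI2 : 0 ≤ ∫ t, v t ^ 2 ∂μ := integral_nonneg fun t => sq_nonneg _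
  have hIa : 0 ≤ ∫ t, |v t| ∂μ := integral_nonneg fun t => abs_nonneg _
  have hsq := pow_le_pow_left₀ hIa hold 2
  rw [mul_pow, rpow_half_sq hI2, rpow_half_sq (by linarith : (0:ℝ) ≤ b - a)] at hsq
  rw [intervalIntegral.integral_of_le hab, intervalIntegral.integral_of_le hab]
  calc (∫ t in Ioc a b, |v t|) ^ 2 = (∫ t, |v t| ∂μ) ^ 2 := rfl
    _ ≤ (∫ t, v t ^ 2 ∂μ) * (b - a) := hsq
    _ = (b - a) * ∫ t in Ioc a b, v t ^ 2 := by rw [mul_comm]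

lemma Gg_nonneg {γ : ℝ} {p : (ℝ → ℝ) × (ℝ → ℝ)} (hp : p ∈ Mset) : 0 ≤ Gg γ p := by
  obtain ⟨hpW, ζ, hζ, hζle⟩ := hp
  have h1 : 0 ≤ ∫ t in (0:ℝ)..1, (p.1 t) ^ (2 * γ / (γ - 1)) :=
    intervalIntegral.integral_nonneg zero_le_one fun t ht =>
      Real.rpow_nonneg (le_trans hζ.le (hζle t ht)) _
  exact div_nonneg (add_nonneg (integral_sq_nonneg _) (Real.rpow_nonneg h1 _))
    (integral_sq_nonneg _)

end PartTwo

section Key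

set_option maxHeartbeats 1000000 in
lemma key {γ : ℝ} (hγ : γ ∈ Ioo (0:ℝ) 1) {q : ℝ → ℝ} (hq : q ∈ Agamma γ)
    {p : (ℝ → ℝ) × (ℝ → ℝ)} (hp : p ∈ W12)
    (hD : 0 < ∫ t in (0:ℝ)..1, (p.1 t) ^ 2) :
    sInf (Gg γ '' Mset) ≤ Rayleigh q p := by
  obtain ⟨hqII, hq0, hqγ⟩ := hq
  have hy : ContinuousOn p.1 (Icc 0 1) := W12_continuousOn hp
  set D : ℝ := ∫ t in (0:ℝ)..1, (p.1 t) ^ 2 with hD_def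
  set E : ℝ := ∫ t in (0:ℝ)..1, (p.2 t) ^ 2 with hE_def
  set Q : ℝ := ∫ t in (0:ℝ)..1, q t with hQ_def
  have hE0 : 0 ≤ E := integral_sq_nonneg _
  have hQ0 : 0 ≤ Q :=
    intervalIntegral.integral_nonneg_of_ae_restrict zero_le_one hq0
  have hqy2 : IntervalIntegrable (fun t => q t * (p.1 t) ^ 2) volume 0 1 :=
    hqII.mul_continuousOn (by rw [uIcc01]; exact hy.pow 2)
  have hqy20 : 0 ≤ ∫ t in (0:ℝ)..1, q t * (p.1 t) ^ 2 := by
    apply intervalIntegral.integral_nonneg_of_ae_restrict zero_le_one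
    filter_upwards [hq0] with t ht
    exact mul_nonneg ht (sq_nonneg _)
  have hray : Rayleigh q p = (E + ∫ t in (0:ℝ)..1, q t * (p.1 t) ^ 2) / D := by
    rw [Rayleigh, intervalIntegral.integral_add hp.2.2 hqy2]
  -- the indicator extension of the derivative
  set v : ℝ → ℝ := (Ioc (0:ℝ) 1).indicator p.2 with hv_def
  have hvint : Integrable v volume := (integrable_indicator_iff measurableSet_Ioc).mpr hp.2.1.1
  have hv2eq : (fun t => v t ^ 2) = (Ioc (0:ℝ) 1).indicator (fun u => p.2 u ^ 2) := by
    funext t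
    by_cases h : t ∈ Ioc (0:ℝ) 1 <;> simp [hv_def, indicator_apply, h]
  have hv2int : Integrable (fun t => v t ^ 2) volume := by
    rw [hv2eq]
    exact (integrable_indicator_iff measurableSet_Ioc).mpr hp.2.2.1
  -- the extension ybar of p.1
  set ybar : ℝ → ℝ := fun x => p.1 0 + ∫ t in (0:ℝ)..x, v t with hybar_def
  have hybar_cont : Continuous ybar :=
    continuous_const.add (intervalIntegral.continuous_primitive
      (fun a b => hvint.intervalIntegrable) 0)
  have hybar_eq : ∀ x ∈ Icc (0:ℝ) 1, ybar x = p.1 x := by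
    intro x hx
    rw [hp.1 x hx, hybar_def]
    simp only
    congr 1
    rw [intervalIntegral.integral_of_le hx.1, intervalIntegral.integral_of_le hx.1]
    apply setIntegral_congr_fun measurableSet_Ioc
    intro t ht
    exact indicator_of_mem (Ioc_subset_Ioc le_rfl hx.2 ht) p.2
  have hybar_sub : ∀ a b : ℝ, ybar b - ybar a = ∫ t in a..b, v t := by
    intro a b
    simp only [hybar_def]
    rw [add_sub_add_left_eq_sub, ← intervalIntegral.integral_add_adjacent_intervals
      (hvint.intervalIntegrable (a := 0) (b := a)) (hvint.intervalIntegrable (a := a) (b := b))]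
    ring
  -- global bound on ybar on [0,2]
  obtain ⟨C, hC⟩ := (isCompact_Icc : IsCompact (Icc (0:ℝ) 2)).exists_bound_of_continuousOn
    hybar_cont.continuousOn
  have hC0 : 0 ≤ C := le_trans (norm_nonneg _) (hC 0 (by norm_num))
  -- start the ε argument
  apply le_of_forall_pos_le_add
  intro ε₀ hε₀
  set δ : ℝ := Real.sqrt (ε₀ * D / (2 * (Q + 1))) with hδ_def
  have hδ : 0 < δ := Real.sqrt_pos.mpr (by positivity)
  have hδsq : δ ^ 2 = ε₀ * D / (2 * (Q + 1)) := Real.sq_sqrt (by positivity)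
  set ε : ℝ := δ ^ 2 / (2 * (C + δ)) with hε_def
  have hCδ : 0 < C + δ := by linarith
  have hε : 0 < ε := by positivity
  have hεeq : 2 * (C + δ) * ε = δ ^ 2 := by
    rw [hε_def]; field_simp
  -- uniform continuity of ybar on [0,2]
  have hUC := (isCompact_Icc : IsCompact (Icc (0:ℝ) 2)).uniformContinuousOn_of_continuous
    hybar_cont.continuousOn
  rw [Metric.uniformContinuousOn_iff] at hUC
  obtain ⟨h₁, hh₁, hmod⟩ := hUC ε hε
  set h : ℝ := min (h₁ / 2) (1 / 2) with hh_def
  have hh : 0 < h := lt_min (by linarith) (by norm_num)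
  have hh1 : h ≤ 1 / 2 := min_le_right _ _
  have hhh₁ : h < h₁ := lt_of_le_of_lt (min_le_left _ _) (by linarith)
  -- the regularized functions
  set zbar : ℝ → ℝ := fun x => Real.sqrt (ybar x ^ 2 + δ ^ 2) with hzbar_def
  have hzbar_cont : Continuous zbar := by
    apply Real.continuous_sqrt.comp
    exact (hybar_cont.pow 2).add continuous_const
  have hzbarδ : ∀ x, δ ≤ zbar x := fun x => sqrt_ge_delta hδ.le _
  have hzbar_lip : ∀ a b : ℝ, |zbar a - zbar b| ≤ |ybar a - ybar b| :=
    fun a b => sqrt_lip δ (ybar a) (ybar b)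
  have hzbar_bd : ∀ x ∈ Icc (0:ℝ) 2, zbar x ≤ C + δ := by
    intro x hx
    refine le_trans (sqrt_le_abs_add hδ.le _) ?_
    have := hC x hx
    rw [Real.norm_eq_abs] at this
    linarith
  have hzbarII : ∀ a b : ℝ, IntervalIntegrable zbar volume a b :=
    fun a b => hzbar_cont.intervalIntegrable a b
  set Z : ℝ → ℝ := fun x => (∫ t in x..(x+h), zbar t) / h with hZ_def
  set W : ℝ → ℝ := fun t => (zbar (t+h) - zbar t) / h with hW_def
  have hshift : Continuous (fun t : ℝ => zbar (t + h)) := hzbar_cont.comp (continuous_add_right h)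
  have hWcont : Continuous W := (hshift.sub hzbar_cont).div_const h
  -- the primitive of zbar
  set P : ℝ → ℝ := fun x => ∫ t in (0:ℝ)..x, zbar t with hP_def
  have hPcont : Continuous P := intervalIntegral.continuous_primitive hzbarII 0
  have hZeqP : ∀ x, Z x = (P (x+h) - P x) / h := by
    intro x
    simp only [hZ_def, hP_def]
    congr 1
    rw [← intervalIntegral.integral_add_adjacent_intervals (hzbarII 0 x) (hzbarII x (x+h))]
    ring
  have hZcont : Continuous Z := by
    have : Z = fun x => (P (x+h) - P x) / h := funext hZeqP
    rw [this]
    exact ((hPcont.comp (continuous_add_right h)).sub hPcont).div_const h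
  -- FTC representation for Z
  have hrep : ∀ x : ℝ, Z x = Z 0 + ∫ t in (0:ℝ)..x, W t := by
    intro x
    have h1 : ∫ t in (0:ℝ)..x, W t = ((P (x+h) - P h) - (P x - P 0)) / h := by
      simp only [hW_def]
      rw [intervalIntegral.integral_div]
      congr 1
      rw [intervalIntegral.integral_sub (hshift.intervalIntegrable 0 x) (hzbarII 0 x)]
      have h2 : ∫ t in (0:ℝ)..x, zbar (t+h) = ∫ t in h..(x+h), zbar t := by
        have := intervalIntegral.integral_comp_add_right (a := 0) (b := x) zbar h
        rwa [zero_add] at this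
      rw [h2]
      have h3 : ∫ t in h..(x+h), zbar t = P (x+h) - P h := by
        simp only [hP_def]
        rw [← intervalIntegral.integral_add_adjacent_intervals (hzbarII 0 h) (hzbarII h (x+h))]
        ring
      rw [h3]
      simp [hP_def, intervalIntegral.integral_same]
    rw [h1, hZeqP x, hZeqP 0]
    have hP00 : P 0 = 0 := by simp [hP_def]
    rw [hP00, zero_add]
    field_simp
    ring
  -- lower bound δ for Z
  have hZδ : ∀ x : ℝ, δ ≤ Z x := by
    intro x
    have hmono := intervalIntegral.integral_mono_on (by linarith : x ≤ x + h)
      (intervalIntegrable_const (c := δ)) (hzbarII x (x+h)) (fun t _ => hzbarδ t)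
    rw [intervalIntegral.integral_const, smul_eq_mul] at hmono
    have hxx : x + h - x = h := by ring
    rw [hxx] at hmono
    rw [hZ_def, le_div_iff₀ hh]
    linarith [hmono]
  have hZW_W12 : ((Z, W) : (ℝ → ℝ) × (ℝ → ℝ)) ∈ W12 :=
    ⟨fun x _ => hrep x, hWcont.intervalIntegrable 0 1, (hWcont.pow 2).intervalIntegrable 0 1⟩
  have hZ_M : ((Z, W) : (ℝ → ℝ) × (ℝ → ℝ)) ∈ Mset := ⟨hZW_W12, δ, hδ, fun x _ => hZδ x⟩
  -- energy bound : ∫ W² ≤ E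
  set H : ℝ → ℝ := fun x => ∫ t in (0:ℝ)..x, v t ^ 2 with hH_def
  have hHcont : Continuous H :=
    intervalIntegral.continuous_primitive (fun a b => hv2int.intervalIntegrable) 0
  have hHsub : ∀ a b : ℝ, H b - H a = ∫ t in a..b, v t ^ 2 := by
    intro a b
    simp only [hH_def]
    rw [← intervalIntegral.integral_add_adjacent_intervals
      (hv2int.intervalIntegrable (a := 0) (b := a)) (hv2int.intervalIntegrable (a := a) (b := b))]
    ring
  have hHmono : ∀ a b : ℝ, a ≤ b → H a ≤ H b := by
    intro a b hab
    have h1 : 0 ≤ ∫ t in a..b, v t ^ 2 :=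
      intervalIntegral.integral_nonneg hab (fun t _ => sq_nonneg _)
    have := hHsub a b
    linarith
  have hH0 : ∀ x : ℝ, 0 ≤ x → 0 ≤ H x := by
    intro x hx
    exact intervalIntegral.integral_nonneg hx (fun t _ => sq_nonneg _)
  -- pointwise bound for W²
  have hWpt : ∀ t : ℝ, W t ^ 2 ≤ (H (t+h) - H t) / h := by
    intro t
    have hlip : |zbar (t+h) - zbar t| ≤ |ybar (t+h) - ybar t| := hzbar_lip _ _
    have hsub : ybar (t+h) - ybar t = ∫ u in t..(t+h), v u := hybar_sub t (t+h)
    have habs : |∫ u in t..(t+h), v u| ≤ ∫ u in t..(t+h), |v u| :=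
      intervalIntegral.abs_integral_le_integral_abs (by linarith)
    have hcs : (∫ u in t..(t+h), |v u|) ^ 2 ≤ h * ∫ u in t..(t+h), v u ^ 2 := by
      have := cs_bound hvint hv2int (a := t) (b := t+h) (by linarith)
      have hxx : t + h - t = h := by ring
      rwa [hxx] at this
    have habs0 : 0 ≤ ∫ u in t..(t+h), |v u| :=
      intervalIntegral.integral_nonneg (by linarith) (fun u _ => abs_nonneg _)
    have hchain : (zbar (t+h) - zbar t) ^ 2 ≤ h * ∫ u in t..(t+h), v u ^ 2 := by
      have h1 : (zbar (t+h) - zbar t) ^ 2 = |zbar (t+h) - zbar t| ^ 2 := (sq_abs _).symm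
      rw [h1]
      calc |zbar (t+h) - zbar t| ^ 2 ≤ (∫ u in t..(t+h), |v u|) ^ 2 := by
            apply pow_le_pow_left₀ (abs_nonneg _)
            exact le_trans hlip (by rw [hsub]; exact habs)
        _ ≤ h * ∫ u in t..(t+h), v u ^ 2 := hcs
    simp only [hW_def]
    rw [div_pow, hHsub t (t+h), div_le_div_iff₀ (by positivity) hh]
    calc (zbar (t+h) - zbar t) ^ 2 * h ≤ (h * ∫ u in t..(t+h), v u ^ 2) * h := by
          apply mul_le_mul_of_nonneg_right hchain hh.le
      _ = (∫ u in t..(t+h), v u ^ 2) * h ^ 2 := by ring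
  -- integrate the pointwise bound
  have hW2E : ∫ t in (0:ℝ)..1, W t ^ 2 ≤ E := by
    have hstep1 : ∫ t in (0:ℝ)..1, W t ^ 2 ≤ ∫ t in (0:ℝ)..1, (H (t+h) - H t) / h := by
      apply intervalIntegral.integral_mono_on zero_le_one
        ((hWcont.pow 2).intervalIntegrable 0 1)
        ((((hHcont.comp (continuous_add_right h)).sub hHcont).div_const h).intervalIntegrable 0 1)
        (fun t _ => hWpt t)
    have hHshift : Continuous (fun t : ℝ => H (t + h)) := hHcont.comp (continuous_add_right h)
    have hstep2 : ∫ t in (0:ℝ)..1, (H (t+h) - H t) / h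
        = ((∫ t in (1:ℝ)..(1+h), H t) - ∫ t in (0:ℝ)..h, H t) / h := by
      rw [intervalIntegral.integral_div]
      congr 1
      rw [intervalIntegral.integral_sub (hHshift.intervalIntegrable 0 1)
        (hHcont.intervalIntegrable 0 1)]
      have h2 : ∫ t in (0:ℝ)..1, H (t+h) = ∫ t in h..(1+h), H t := by
        have := intervalIntegral.integral_comp_add_right (a := (0:ℝ)) (b := 1) H h
        rwa [zero_add] at this
      rw [h2]
      have h3 : ∫ t in h..(1+h), H t
          = (∫ t in h..(1:ℝ), H t) + ∫ t in (1:ℝ)..(1+h), H t :=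
        (intervalIntegral.integral_add_adjacent_intervals (hHcont.intervalIntegrable h 1)
          (hHcont.intervalIntegrable 1 (1+h))).symm
      have h4 : ∫ t in (0:ℝ)..1, H t
          = (∫ t in (0:ℝ)..h, H t) + ∫ t in h..(1:ℝ), H t :=
        (intervalIntegral.integral_add_adjacent_intervals (hHcont.intervalIntegrable 0 h)
          (hHcont.intervalIntegrable h 1)).symm
      rw [h3, h4]
      ring
    have hstep3 : (∫ t in (1:ℝ)..(1+h), H t) ≤ h * H (1+h) := by
      have := intervalIntegral.integral_mono_on (by linarith : (1:ℝ) ≤ 1 + h)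
        (hHcont.intervalIntegrable (μ := volume) 1 (1+h)) (intervalIntegrable_const (c := H (1+h)))
        (fun t ht => hHmono t (1+h) ht.2)
      rw [intervalIntegral.integral_const, smul_eq_mul] at this
      have hxx : 1 + h - 1 = h := by ring
      rwa [hxx] at this
    have hstep4 : 0 ≤ ∫ t in (0:ℝ)..h, H t :=
      intervalIntegral.integral_nonneg hh.le (fun t ht => hH0 t ht.1)
    have hstep5 : H (1+h) = E := by
      have h5 : H (1+h) - H 1 = ∫ t in (1:ℝ)..(1+h), v t ^ 2 := hHsub 1 (1+h)
      have h6 : ∫ t in (1:ℝ)..(1+h), v t ^ 2 = 0 := by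
        rw [intervalIntegral.integral_of_le (by linarith : (1:ℝ) ≤ 1 + h)]
        apply setIntegral_eq_zero_of_forall_eq_zero
        intro t ht
        have : t ∉ Ioc (0:ℝ) 1 := fun hmem => absurd hmem.2 (not_le.mpr ht.1)
        simp [hv_def, indicator_of_notMem this]
      have h7 : H 1 = E := by
        simp only [hH_def, hE_def]
        rw [intervalIntegral.integral_of_le zero_le_one,
          intervalIntegral.integral_of_le zero_le_one]
        apply setIntegral_congr_fun measurableSet_Ioc
        intro t ht
        simp [hv_def, indicator_of_mem ht]
      linarith
    calc ∫ t in (0:ℝ)..1, W t ^ 2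
        ≤ ((∫ t in (1:ℝ)..(1+h), H t) - ∫ t in (0:ℝ)..h, H t) / h := by
          rw [← hstep2]; exact hstep1
      _ ≤ (h * H (1+h) - 0) / h := by
          apply div_le_div_of_nonneg_right ?_ hh.le
          · linarith
      _ = H (1+h) := by rw [sub_zero, mul_div_cancel_left₀ _ hh.ne']
      _ = E := hstep5
  -- closeness of Z to zbar on [0,1]
  have hclose : ∀ t ∈ Icc (0:ℝ) 1, |Z t - zbar t| ≤ ε := by
    intro t ht
    have ht2 : t ∈ Icc (0:ℝ) 2 := ⟨ht.1, by linarith [ht.2]⟩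
    have hZsub : Z t - zbar t = (∫ u in t..(t+h), (zbar u - zbar t)) / h := by
      rw [intervalIntegral.integral_sub (hzbarII t (t+h)) (intervalIntegrable_const (c := zbar t)),
        intervalIntegral.integral_const, smul_eq_mul]
      have hxx : t + h - t = h := by ring
      rw [hxx, hZ_def]
      field_simp
    rw [hZsub, abs_div, abs_of_pos hh, div_le_iff₀ hh]
    calc |∫ u in t..(t+h), (zbar u - zbar t)|
        ≤ ∫ u in t..(t+h), |zbar u - zbar t| :=
          intervalIntegral.abs_integral_le_integral_abs (by linarith)
      _ ≤ ∫ u in t..(t+h), (fun _ => ε) u := by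
          apply intervalIntegral.integral_mono_on (by linarith)
            (((hzbar_cont.sub continuous_const).abs).intervalIntegrable t (t+h))
            (intervalIntegrable_const (c := ε))
          intro u hu
          have hu2 : u ∈ Icc (0:ℝ) 2 := ⟨by linarith [ht.1, hu.1], by linarith [ht.2, hu.2, hh1]⟩
          have hdist : dist u t < h₁ := by
            rw [Real.dist_eq, abs_of_nonneg (by linarith [hu.1] : (0:ℝ) ≤ u - t)]
            linarith [hu.2]
          have := hmod u hu2 t ht2 hdist
          rw [Real.dist_eq] at this
          exact le_trans (hzbar_lip u t) this.le
      _ = ε * h := by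
          rw [intervalIntegral.integral_const, smul_eq_mul]
          ring
  -- upper bound for Z and zbar on [0,1]
  have hzbar_bd1 : ∀ t ∈ Icc (0:ℝ) 1, zbar t ≤ C + δ :=
    fun t ht => hzbar_bd t ⟨ht.1, by linarith [ht.2]⟩
  have hZbd : ∀ t ∈ Icc (0:ℝ) 1, Z t ≤ C + δ := by
    intro t ht
    rw [hZ_def, div_le_iff₀ hh]
    have := intervalIntegral.integral_mono_on (by linarith : t ≤ t + h)
      (hzbarII t (t+h)) (intervalIntegrable_const (c := C + δ))
      (fun u hu => hzbar_bd u ⟨by linarith [ht.1, hu.1], by linarith [ht.2, hu.2, hh1]⟩)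
    rw [intervalIntegral.integral_const, smul_eq_mul] at this
    have hxx : t + h - t = h := by ring
    rw [hxx] at this
    linarith
  -- the square comparison
  have hsqcmp : ∀ t ∈ Icc (0:ℝ) 1, |Z t ^ 2 - zbar t ^ 2| ≤ δ ^ 2 := by
    intro t ht
    have h1 : Z t ^ 2 - zbar t ^ 2 = (Z t - zbar t) * (Z t + zbar t) := by ring
    rw [h1, abs_mul]
    have h2 : |Z t + zbar t| ≤ 2 * (C + δ) := by
      rw [abs_of_pos (by linarith [hZδ t, hzbarδ t] : 0 < Z t + zbar t)]
      linarith [hZbd t ht, hzbar_bd1 t ht]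
    calc |Z t - zbar t| * |Z t + zbar t| ≤ ε * (2 * (C + δ)) :=
          mul_le_mul (hclose t ht) h2 (abs_nonneg _) hε.le
      _ = δ ^ 2 := by rw [← hεeq]; ring
  -- zbar² on [0,1]
  have hzbar2 : ∀ t ∈ Icc (0:ℝ) 1, zbar t ^ 2 = p.1 t ^ 2 + δ ^ 2 := by
    intro t ht
    simp only [hzbar_def]
    rw [Real.sq_sqrt (by positivity), hybar_eq t ht]
  -- comparison of ∫ q Z² with ∫ q y²
  have hqZ2 : ∫ t in (0:ℝ)..1, q t * Z t ^ 2
      ≤ (∫ t in (0:ℝ)..1, q t * (p.1 t) ^ 2) + 2 * δ ^ 2 * Q := by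
    have hcomp : ∫ t in (0:ℝ)..1, q t * Z t ^ 2
        ≤ ∫ t in (0:ℝ)..1, (q t * (p.1 t) ^ 2 + 2 * δ ^ 2 * q t) := by
      apply intervalIntegral.integral_mono_ae_restrict zero_le_one
        (hqII.mul_continuousOn (by rw [uIcc01]; exact (hZcont.pow 2).continuousOn))
        (by
          apply IntervalIntegrable.add hqy2
          exact hqII.const_mul _)
      filter_upwards [hq0, self_mem_ae_restrict measurableSet_Icc] with t htq htm
      have h1 : Z t ^ 2 ≤ p.1 t ^ 2 + 2 * δ ^ 2 := by
        have := hsqcmp t htm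
        have h2 := hzbar2 t htm
        have h3 : Z t ^ 2 - zbar t ^ 2 ≤ δ ^ 2 := le_trans (le_abs_self _) this
        linarith
      calc q t * Z t ^ 2 ≤ q t * (p.1 t ^ 2 + 2 * δ ^ 2) :=
            mul_le_mul_of_nonneg_left h1 htq
        _ = q t * p.1 t ^ 2 + 2 * δ ^ 2 * q t := by ring
    have hsplit : ∫ t in (0:ℝ)..1, (q t * (p.1 t) ^ 2 + 2 * δ ^ 2 * q t)
        = (∫ t in (0:ℝ)..1, q t * (p.1 t) ^ 2) + 2 * δ ^ 2 * Q := by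
      rw [intervalIntegral.integral_add hqy2 (hqII.const_mul _),
        intervalIntegral.integral_const_mul]
    linarith [hcomp, hsplit.symm.le]
  -- lower bound for ∫ Z²
  have hZ2low : D ≤ ∫ t in (0:ℝ)..1, Z t ^ 2 := by
    rw [hD_def]
    apply intervalIntegral.integral_mono_on zero_le_one (contOn_II (hy.pow 2))
      ((hZcont.pow 2).intervalIntegrable 0 1)
    intro t ht
    have h3 : zbar t ^ 2 - Z t ^ 2 ≤ δ ^ 2 := by
      have := abs_le.mp (hsqcmp t ht)
      linarith [this.1]
    have h2 := hzbar2 t ht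
    show p.1 t ^ 2 ≤ Z t ^ 2
    linarith
  -- reverse Hölder for Z
  have hrevH : (∫ t in (0:ℝ)..1, Z t ^ (2 * γ / (γ - 1))) ^ ((γ - 1) / γ)
      ≤ ∫ t in (0:ℝ)..1, q t * Z t ^ 2 :=
    rev_holder hγ hδ hqII hq0 hqγ hZcont.continuousOn (fun x _ => hZδ x)
  -- assemble the bound on Gg
  have hGgle : Gg γ ((Z, W) : (ℝ → ℝ) × (ℝ → ℝ))
      ≤ ((E + ∫ t in (0:ℝ)..1, q t * (p.1 t) ^ 2) + 2 * δ ^ 2 * Q) / D := by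
    rw [Gg, Jg]
    simp only
    apply div_le_div₀ (by positivity) ?_ hD hZ2low
    have := le_trans hrevH hqZ2
    linarith [hW2E]
  -- final computation
  have hfin : ((E + ∫ t in (0:ℝ)..1, q t * (p.1 t) ^ 2) + 2 * δ ^ 2 * Q) / D
      ≤ Rayleigh q p + ε₀ := by
    rw [hray, add_div]
    have h2 : 2 * δ ^ 2 * (Q + 1) = ε₀ * D := by
      rw [hδsq]; field_simp
    have h3 : 2 * δ ^ 2 * Q / D ≤ ε₀ := by
      rw [div_le_iff₀ hD]
      nlinarith
    linarith
  have hsinf : sInf (Gg γ '' Mset) ≤ Gg γ ((Z, W) : (ℝ → ℝ) × (ℝ → ℝ)) := by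
    apply csInf_le
    · refine ⟨0, ?_⟩
      rintro x ⟨p', hp', rfl⟩
      exact Gg_nonneg hp'
    · exact mem_image_of_mem _ hZ_M
  linarith

end Key

lemma one_mem_Mset : ((fun _ => (1:ℝ)), (fun _ => (0:ℝ))) ∈ Mset :=
  ⟨one_mem_W12, 1, one_pos, fun x _ => le_refl 1⟩

lemma part2 {γ : ℝ} (hγ : γ ∈ Ioo (0:ℝ) 1) : sInf (Gg γ '' Mset) ≤ mGamma γ := by
  rw [mGamma]
  apply le_csInf
  · refine ⟨lambda1 (fun _ => 1), mem_image_of_mem _ ?_⟩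
    refine ⟨intervalIntegrable_const, ae_of_all _ (fun _ => zero_le_one), by simp⟩
  · rintro b ⟨q, hqA, rfl⟩
    rw [lambda1]
    apply le_csInf (RSet_nonempty q)
    rintro r ⟨p', hp', hpos, rfl⟩
    exact key hγ hqA hp' hpos

/-- For every `γ ∈ (0,1)` one has `m_γ = inf_{y ∈ M} G_γ(y)`. -/
theorem mGamma_eq_inf_Gg (γ : ℝ) (hγ : γ ∈ Ioo (0:ℝ) 1) :
    mGamma γ = sInf (Gg γ '' Mset) := by
  apply le_antisymm
  · apply le_csInf
    · exact ⟨Gg γ ((fun _ => (1:ℝ)), (fun _ => (0:ℝ))), mem_image_of_mem _ one_mem_Mset⟩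
    · rintro b ⟨p, hpM, rfl⟩
      exact part1 hγ hpM
  · exact part2 hγ
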